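/- arXiv:1101.3368 — 2 statements merged into one kernel-verified Lean document; each statement's English description precedes it below -/
import Mathlib

section
/- Let I = I_{g,(m_1,…,m_n)} ⊆ R. For each k with 0 ≤ k ≤ n−1, let E_k = (e_{j',k'}) be the g×n matrix with e_{j',k'} = d_{k'} − 1 for 1 ≤ j' ≤ g and 1 ≤ k' ≤ k, and e_{j',k'} = 0 otherwise (so E_0 = 0). Then for every j with 1 ≤ j ≤ g, the monomial X^{E_k} · x_{j,k+1}^{d_{k+1}} lies in I. -/
open MvPolynomial Finset

noncomputable section

namespace Paper

open scoped Classical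

variable (K : Type) [Field K] (g n : ℕ) (m : Fin n → ℕ)

/-- `d k = m_k + m_{k+1} + ⋯ + m_n + 1` (with `k` zero-indexed). -/
def dd (k : Fin n) : ℕ := (∑ k' ∈ Finset.Ici k, m k') + 1

/-- `M k`: equals `m k` for the last index and `m k - 1` otherwise. -/
def MM (k : Fin n) : ℕ := if k.val = n - 1 then m k else m k - 1

/-- The membership predicate for the set `𝒜_k` (for `0 ≤ k ≤ n`):
columns (zero-indexed) `< k` have entries bounded by `M` and column sum `m`,
and all later columns vanish. -/
def mem𝒜 (k : ℕ) (A : Fin g → Fin n → ℕ) : Prop :=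
  ∀ k' : Fin n,
    (k'.val < k → (∀ j, A j k' ≤ MM n m k') ∧ (∑ j, A j k' = m k')) ∧
    (k ≤ k'.val → ∀ j, A j k' = 0)

/-- The (finite) set `𝒜_k` of admissible `g × n` matrices. -/
def 𝒜 (k : ℕ) : Finset (Fin g → Fin n → ℕ) :=
  (Fintype.piFinset fun _ : Fin g => Fintype.piFinset fun k' : Fin n =>
      Finset.range (m k' + 1)).filter (mem𝒜 g n m k)

/-- The variables of the ring `R`: the `x_{j,k}` and one `y_A` for each `A ∈ 𝒜_n`. -/
def Var : Type := (Fin g × Fin n) ⊕ {A : Fin g → Fin n → ℕ // A ∈ 𝒜 g n m n}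

/-- The variable `x_{j,k}`. -/
def xv (j : Fin g) (k : Fin n) : MvPolynomial (Var g n m) K := X (Sum.inl (j, k))

/-- The variable `y_A` for `A ∈ 𝒜_n`. -/
def yv (B : {A : Fin g → Fin n → ℕ // A ∈ 𝒜 g n m n}) : MvPolynomial (Var g n m) K :=
  X (Sum.inr B)

/-- The monomial `X^A = ∏_{j,k} x_{j,k}^{A j k}`. -/
def Xpow (A : Fin g → Fin n → ℕ) : MvPolynomial (Var g n m) K :=
  ∏ j : Fin g, ∏ k : Fin n, xv K g n m j k ^ A j k

/-- The polynomial `f`. -/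
def ff : MvPolynomial (Var g n m) K :=
  (∑ k : Fin (n - 1), ∑ A ∈ 𝒜 g n m k.val, ∑ j : Fin g,
      Xpow K g n m A
        * xv K g n m j ⟨k.val, by have := k.isLt; omega⟩ ^ m ⟨k.val, by have := k.isLt; omega⟩
        * xv K g n m j ⟨k.val + 1, by have := k.isLt; omega⟩ ^
            dd n m ⟨k.val + 1, by have := k.isLt; omega⟩)
  + ∑ B : {A : Fin g → Fin n → ℕ // A ∈ 𝒜 g n m n},
      Xpow K g n m B.1 * yv K g n m B

/-- The ideal `I_{g,(m_1,…,m_n)} = (x_{1,1}^d, …, x_{g,1}^d, f)`. -/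
def paperIdeal (hn : 0 < n) : Ideal (MvPolynomial (Var g n m) K) :=
  Ideal.span
    ((Set.range fun j : Fin g => xv K g n m j ⟨0, hn⟩ ^ dd n m ⟨0, hn⟩) ∪ {ff K g n m})

/-! ### Auxiliary lemmas -/

lemma Xpow_zero : Xpow K g n m (fun _ _ => 0) = 1 := by simp [Xpow]

lemma Xpow_mul (A B : Fin g → Fin n → ℕ) :
    Xpow K g n m A * Xpow K g n m B = Xpow K g n m (fun j k => A j k + B j k) := by
  simp [Xpow, pow_add, Finset.prod_mul_distrib]

lemma xv_pow_eq (j : Fin g) (kk : Fin n) (a : ℕ) :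
    xv K g n m j kk ^ a
      = Xpow K g n m (fun j' k' => if j' = j ∧ k' = kk then a else 0) := by
  unfold Xpow
  rw [Fintype.prod_eq_single j (fun j' hj' => by simp [hj'])]
  rw [Fintype.prod_eq_single kk (fun k' hk' => by simp [hk'])]
  simp

lemma Xpow_mul_xv (A : Fin g → Fin n → ℕ) (j : Fin g) (kk : Fin n) (a : ℕ) :
    Xpow K g n m A * xv K g n m j kk ^ a
      = Xpow K g n m (fun j' k' => A j' k' + if j' = j ∧ k' = kk then a else 0) := by
  rw [xv_pow_eq, Xpow_mul]

lemma Xpow_factor (F P : Fin g → Fin n → ℕ) (h : ∀ j k, P j k ≤ F j k) :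
    Xpow K g n m F = Xpow K g n m (fun j k => F j k - P j k) * Xpow K g n m P := by
  rw [Xpow_mul]
  congr 1
  funext j k
  exact (Nat.sub_add_cancel (h j k)).symm

lemma expand4 (Wm Am : Fin g → Fin n → ℕ) (j' : Fin g) (k1 k2 : Fin n) (a b : ℕ) :
    Xpow K g n m Wm * (Xpow K g n m Am * xv K g n m j' k1 ^ a * xv K g n m j' k2 ^ b)
      = Xpow K g n m (fun jj kk => Wm jj kk + Am jj kk
          + (if jj = j' ∧ kk = k1 then a else 0) + (if jj = j' ∧ kk = k2 then b else 0)) := by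
  rw [show Xpow K g n m Wm * (Xpow K g n m Am * xv K g n m j' k1 ^ a * xv K g n m j' k2 ^ b)
      = ((Xpow K g n m Wm * Xpow K g n m Am) * xv K g n m j' k1 ^ a) * xv K g n m j' k2 ^ b
      from by ring, Xpow_mul, Xpow_mul_xv, Xpow_mul_xv]

lemma m_lt_dd (k : Fin n) : m k < dd n m k := by
  unfold dd
  have : m k ≤ ∑ k' ∈ Finset.Ici k, m k' :=
    Finset.single_le_sum (fun i _ => Nat.zero_le _) (Finset.mem_Ici.2 le_rfl)
  omega

lemma MM_eq (k : Fin n) (h : k.val + 1 < n) : MM n m k = m k - 1 := if_neg (by omega)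

lemma mem𝒜_of_mem {k : ℕ} {A : Fin g → Fin n → ℕ} (h : A ∈ 𝒜 g n m k) :
    mem𝒜 g n m k A := (Finset.mem_filter.1 h).2

lemma exists_lt_of_sum_eq {g : ℕ} (a b : Fin g → ℕ)
    (h : ∑ j, a j = ∑ j, b j) (hne : ∃ j, a j ≠ b j) : ∃ j₀, b j₀ < a j₀ := by
  by_contra h'
  push_neg at h'
  obtain ⟨j, hj⟩ := hne
  have := Finset.sum_lt_sum (fun i _ => h' i) ⟨j, Finset.mem_univ _, lt_of_le_of_ne (h' j) hj⟩
  omega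

lemma exists_pos_ne {g : ℕ} (a : Fin g → ℕ) (j : Fin g) (M : ℕ)
    (hsum : ∑ j', a j' = M) (hub : a j + 1 ≤ M) : ∃ j₀, j₀ ≠ j ∧ 1 ≤ a j₀ := by
  by_contra h'
  push_neg at h'
  have h0 : ∀ j₀, j₀ ≠ j → a j₀ = 0 := fun j₀ hj₀ => by have := h' j₀ hj₀; omega
  have : ∑ j', a j' = a j := Finset.sum_eq_single j (fun b _ hb => h0 b hb) (by simp)
  omega

lemma min_diff {n : ℕ} (P : Fin n → Prop) (hex : ∃ t, P t) :
    ∃ t₀, P t₀ ∧ ∀ t : Fin n, t.val < t₀.val → ¬ P t := by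
  classical
  obtain ⟨t, ht⟩ := hex
  obtain ⟨t₀, ht₀, hmin⟩ := Finset.exists_min_image (Finset.univ.filter P) (fun x => x.val)
    ⟨t, by simp [ht]⟩
  exact ⟨t₀, (Finset.mem_filter.1 ht₀).2, fun t' ht' hPt' => by
    have := hmin t' (by simp [hPt']); omega⟩

lemma one_le_m (hm2 : ∀ i : Fin n, i.val + 2 < n → 2 ≤ m i)
    (hm1 : ∀ i : Fin n, i.val + 2 = n → 1 ≤ m i) (kk : Fin n) (h : kk.val + 1 < n) :
    1 ≤ m kk := by
  rcases Nat.lt_or_ge (kk.val + 2) n with h'|h'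
  · exact le_trans one_le_two (hm2 kk h')
  · exact hm1 kk (by omega)

lemma Astar_mem (hg : 2 ≤ g) (hm2 : ∀ i : Fin n, i.val + 2 < n → 2 ≤ m i)
    (N : ℕ) (hN : N + 1 < n) :
    (fun (jj : Fin g) (kk : Fin n) =>
        if kk.val < N ∧ jj = (⟨0, by omega⟩ : Fin g) then m kk - 1
        else if kk.val < N ∧ jj = (⟨1, by omega⟩ : Fin g) then 1 else 0) ∈ 𝒜 g n m N := by
  have hm : ∀ kk : Fin n, kk.val < N → 2 ≤ m kk := fun kk hkk => hm2 kk (by omega)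
  refine Finset.mem_filter.2 ⟨?_, ?_⟩
  · refine Fintype.mem_piFinset.2 fun jj => Fintype.mem_piFinset.2 fun kk => ?_
    refine Finset.mem_range.2 ?_
    split_ifs with h1 h2
    · omega
    · have := hm kk h2.1; omega
    · omega
  · intro k'
    constructor
    · intro hk'
      have h2 := hm k' hk'
      constructor
      · intro j
        dsimp only
        have hMM : MM n m k' = m k' - 1 := if_neg (by omega)
        rw [hMM]
        split_ifs <;> omega
      · rw [Fintype.sum_eq_add (⟨0, by omega⟩ : Fin g) (⟨1, by omega⟩ : Fin g)
          (by simp [Fin.ext_iff])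
          (fun c ⟨hc0, hc1⟩ => by
            dsimp only
            rw [if_neg (by tauto), if_neg (by tauto)])]
        dsimp only
        rw [if_pos ⟨hk', rfl⟩, if_neg (by simp [Fin.ext_iff]), if_pos ⟨hk', rfl⟩]
        omega
    · intro hk' j
      dsimp only
      rw [if_neg (by omega), if_neg (by omega)]

lemma find_x (hm2 : ∀ i : Fin n, i.val + 2 < n → 2 ≤ m i)
    (hm1 : ∀ i : Fin n, i.val + 2 = n → 1 ≤ m i)
    (N : ℕ) (hN : N + 1 < n)
    (j : Fin g) (Ast : Fin g → Fin n → ℕ) (hAst : mem𝒜 g n m N Ast)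
    (W : Fin g → Fin n → ℕ)
    (hW1 : ∀ (jj : Fin g) (kk : Fin n), kk.val < N → W jj kk = dd n m kk - 1 - Ast jj kk)
    (hW3 : ∀ (jj : Fin g) (kk : Fin n), jj ≠ j → kk.val = N → W jj kk = dd n m kk - 1)
    (κv : ℕ) (hκ : κv + 1 < n)
    (A' : Fin g → Fin n → ℕ) (hA' : mem𝒜 g n m κv A')
    (j' : Fin g)
    (hne : ¬(κv = N ∧ A' = Ast ∧ j' = j)) :
    ∃ (k₀ : Fin n) (j₀ : Fin g), k₀.val ≤ N ∧
      ∀ (jj : Fin g) (kk : Fin n),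
        (if kk.val < k₀.val then dd n m kk - 1 else 0)
          + (if jj = j₀ ∧ kk = k₀ then dd n m k₀ else 0)
        ≤ W jj kk + A' jj kk
          + (if jj = j' ∧ kk = (⟨κv, by omega⟩ : Fin n) then m (⟨κv, by omega⟩ : Fin n) else 0)
          + (if jj = j' ∧ kk = (⟨κv + 1, hκ⟩ : Fin n) then dd n m (⟨κv + 1, hκ⟩ : Fin n) else 0) := by
  have hAstub : ∀ (jj : Fin g) (kk : Fin n), kk.val < N → Ast jj kk + 1 ≤ m kk := by
    intro jj kk h
    have h1 := ((hAst kk).1 h).1 jj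
    rw [MM_eq n m kk (by omega)] at h1
    have := hm2 kk (by omega)
    omega
  by_cases hD : ∃ t : Fin n, t.val < N ∧ t.val < κv ∧ ∃ jj, A' jj t ≠ Ast jj t
  · obtain ⟨t₀, ⟨ht0N, ht0κ, hdiff⟩, hmini⟩ := min_diff _ hD
    obtain ⟨j₀, hj₀⟩ := exists_lt_of_sum_eq (fun jj => A' jj t₀) (fun jj => Ast jj t₀)
      (by rw [((hA' t₀).1 ht0κ).2, ((hAst t₀).1 ht0N).2]) hdiff
    refine ⟨t₀, j₀, le_of_lt ht0N, fun jj kk => ?_⟩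
    rcases Nat.lt_trichotomy kk.val t₀.val with hlt|heq|hgt
    · have hA'eq : A' jj kk = Ast jj kk := by
        by_contra hne'
        exact hmini kk hlt ⟨by omega, by omega, jj, hne'⟩
      rw [if_pos hlt, if_neg (by rintro ⟨-, rfl⟩; omega)]
      have hw := hW1 jj kk (by omega)
      have hub := hAstub jj kk (by omega)
      have hd := m_lt_dd n m kk
      omega
    · have hkk : kk = t₀ := Fin.ext heq
      subst hkk
      by_cases hjj : jj = j₀
      · subst hjj
        rw [if_neg (by omega), if_pos ⟨rfl, rfl⟩]
        have hw := hW1 jj kk ht0N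
        have hub := hAstub jj kk ht0N
        have hd := m_lt_dd n m kk
        omega
      · rw [if_neg (by omega), if_neg (by tauto)]
        omega
    · rw [if_neg (by omega), if_neg (by rintro ⟨-, rfl⟩; omega)]
      omega
  · push_neg at hD
    rcases Nat.lt_trichotomy κv N with hc|hc|hc
    · have hck : κv < n := by omega
      refine ⟨⟨κv, hck⟩, j', by simpa using le_of_lt hc, fun jj kk => ?_⟩
      rcases Nat.lt_trichotomy kk.val κv with hlt|heq|hgt
      · have hA'eq : A' jj kk = Ast jj kk := hD kk (by omega) hlt jj
        rw [if_pos hlt, if_neg (by rintro ⟨-, rfl⟩; simp at hlt)]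
        have hw := hW1 jj kk (by omega)
        have hub := hAstub jj kk (by omega)
        have hd := m_lt_dd n m kk
        omega
      · have hkk : kk = (⟨κv, hck⟩ : Fin n) := Fin.ext heq
        subst hkk
        by_cases hjj : jj = j'
        · subst hjj
          rw [if_neg (by simp), if_pos ⟨rfl, rfl⟩, if_pos ⟨rfl, rfl⟩]
          have hval : (⟨κv, hck⟩ : Fin n).val = κv := rfl
          have hw := hW1 jj (⟨κv, hck⟩ : Fin n) (by omega)
          have hub := hAstub jj (⟨κv, hck⟩ : Fin n) (by omega)
          have hd := m_lt_dd n m (⟨κv, hck⟩ : Fin n)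
          omega
        · rw [if_neg (by simp), if_neg (by tauto)]
          omega
      · rw [if_neg (show ¬ (kk.val < κv) by omega), if_neg (by rintro ⟨-, rfl⟩; exact lt_irrefl κv hgt)]
        omega
    · subst hc
      have hAe : A' = Ast := by
        funext jj t
        rcases Nat.lt_or_ge t.val κv with h|h
        · exact hD t h h jj
        · rw [(hA' t).2 h jj, (hAst t).2 h jj]
      have hj' : j' ≠ j := fun h => hne ⟨rfl, hAe, h⟩
      have hck : κv < n := by omega
      refine ⟨⟨κv, hck⟩, j', by simp, fun jj kk => ?_⟩
      rcases Nat.lt_trichotomy kk.val κv with hlt|heq|hgt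
      · rw [if_pos hlt, if_neg (by rintro ⟨-, rfl⟩; simp at hlt)]
        have hw := hW1 jj kk hlt
        have hub := hAstub jj kk hlt
        have hd := m_lt_dd n m kk
        rw [hAe]
        omega
      · have hkk : kk = (⟨κv, hck⟩ : Fin n) := Fin.ext heq
        subst hkk
        by_cases hjj : jj = j'
        · subst hjj
          rw [if_neg (by simp), if_pos ⟨rfl, rfl⟩, if_pos ⟨rfl, rfl⟩]
          have hval : (⟨κv, hck⟩ : Fin n).val = κv := rfl
          have hw := hW3 jj (⟨κv, hck⟩ : Fin n) hj' rfl
          have h1 := one_le_m n m hm2 hm1 (⟨κv, hck⟩ : Fin n) (by simpa using hN)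
          omega
        · rw [if_neg (by simp), if_neg (by tauto)]
          omega
      · rw [if_neg (show ¬ (kk.val < κv) by omega), if_neg (by rintro ⟨-, rfl⟩; exact lt_irrefl κv hgt)]
        omega
    · have hNlt : N < n := by omega
      have h1 : 1 ≤ m (⟨N, hNlt⟩ : Fin n) := one_le_m n m hm2 hm1 _ (by simpa using hN)
      have hs : ∑ jj, A' jj (⟨N, hNlt⟩ : Fin n) = m (⟨N, hNlt⟩ : Fin n) :=
        ((hA' _).1 (by simpa using hc)).2
      have hub : A' j (⟨N, hNlt⟩ : Fin n) + 1 ≤ m (⟨N, hNlt⟩ : Fin n) := by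
        have h2 := ((hA' (⟨N, hNlt⟩ : Fin n)).1 (by simpa using hc)).1 j
        rw [MM_eq n m _ (by simpa using hN)] at h2
        omega
      obtain ⟨j₀, hj₀ne, hj₀pos⟩ := exists_pos_ne (fun jj => A' jj (⟨N, hNlt⟩ : Fin n)) j _ hs hub
      refine ⟨⟨N, hNlt⟩, j₀, by simp, fun jj kk => ?_⟩
      rcases Nat.lt_trichotomy kk.val N with hlt|heq|hgt
      · have hA'eq : A' jj kk = Ast jj kk := hD kk hlt (by omega) jj
        rw [if_pos hlt, if_neg (by rintro ⟨-, rfl⟩; simp at hlt)]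
        have hw := hW1 jj kk hlt
        have hub' := hAstub jj kk hlt
        have hd := m_lt_dd n m kk
        omega
      · have hkk : kk = (⟨N, hNlt⟩ : Fin n) := Fin.ext heq
        subst hkk
        by_cases hjj : jj = j₀
        · subst hjj
          rw [if_neg (by simp), if_pos ⟨rfl, rfl⟩]
          have hval : (⟨N, hNlt⟩ : Fin n).val = N := rfl
          have hw := hW3 jj (⟨N, hNlt⟩ : Fin n) hj₀ne rfl
          have hpos : 1 ≤ A' jj (⟨N, hNlt⟩ : Fin n) := hj₀pos
          omega
        · rw [if_neg (by simp), if_neg (by tauto)]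
          omega
      · rw [if_neg (show ¬ (kk.val < N) by omega), if_neg (by rintro ⟨-, rfl⟩; exact lt_irrefl N hgt)]
        omega

lemma find_y (hm2 : ∀ i : Fin n, i.val + 2 < n → 2 ≤ m i)
    (hm1 : ∀ i : Fin n, i.val + 2 = n → 1 ≤ m i)
    (N : ℕ) (hN : N + 1 < n)
    (j : Fin g) (Ast : Fin g → Fin n → ℕ) (hAst : mem𝒜 g n m N Ast)
    (W : Fin g → Fin n → ℕ)
    (hW1 : ∀ (jj : Fin g) (kk : Fin n), kk.val < N → W jj kk = dd n m kk - 1 - Ast jj kk)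
    (hW3 : ∀ (jj : Fin g) (kk : Fin n), jj ≠ j → kk.val = N → W jj kk = dd n m kk - 1)
    (B : Fin g → Fin n → ℕ) (hB : mem𝒜 g n m n B) :
    ∃ (k₀ : Fin n) (j₀ : Fin g), k₀.val ≤ N ∧
      ∀ (jj : Fin g) (kk : Fin n),
        (if kk.val < k₀.val then dd n m kk - 1 else 0)
          + (if jj = j₀ ∧ kk = k₀ then dd n m k₀ else 0)
        ≤ W jj kk + B jj kk := by
  have hAstub : ∀ (jj : Fin g) (kk : Fin n), kk.val < N → Ast jj kk + 1 ≤ m kk := by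
    intro jj kk h
    have h1 := ((hAst kk).1 h).1 jj
    rw [MM_eq n m kk (by omega)] at h1
    have := hm2 kk (by omega)
    omega
  by_cases hD : ∃ t : Fin n, t.val < N ∧ ∃ jj, B jj t ≠ Ast jj t
  · obtain ⟨t₀, ⟨ht0N, hdiff⟩, hmini⟩ := min_diff _ hD
    obtain ⟨j₀, hj₀⟩ := exists_lt_of_sum_eq (fun jj => B jj t₀) (fun jj => Ast jj t₀)
      (by rw [((hB t₀).1 (by omega)).2, ((hAst t₀).1 ht0N).2]) hdiff
    refine ⟨t₀, j₀, le_of_lt ht0N, fun jj kk => ?_⟩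
    rcases Nat.lt_trichotomy kk.val t₀.val with hlt|heq|hgt
    · have hBeq : B jj kk = Ast jj kk := by
        by_contra hne'
        exact hmini kk hlt ⟨by omega, jj, hne'⟩
      rw [if_pos hlt, if_neg (by rintro ⟨-, rfl⟩; omega)]
      have hw := hW1 jj kk (by omega)
      have hub := hAstub jj kk (by omega)
      have hd := m_lt_dd n m kk
      omega
    · have hkk : kk = t₀ := Fin.ext heq
      subst hkk
      by_cases hjj : jj = j₀
      · subst hjj
        rw [if_neg (by omega), if_pos ⟨rfl, rfl⟩]
        have hw := hW1 jj kk ht0N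
        have hub := hAstub jj kk ht0N
        have hd := m_lt_dd n m kk
        omega
      · rw [if_neg (by omega), if_neg (by tauto)]
        omega
    · rw [if_neg (by omega), if_neg (by rintro ⟨-, rfl⟩; omega)]
      omega
  · push_neg at hD
    have hNlt : N < n := by omega
    have h1 : 1 ≤ m (⟨N, hNlt⟩ : Fin n) := one_le_m n m hm2 hm1 _ (by simpa using hN)
    have hs : ∑ jj, B jj (⟨N, hNlt⟩ : Fin n) = m (⟨N, hNlt⟩ : Fin n) :=
      ((hB _).1 (by simp; omega)).2
    have hub : B j (⟨N, hNlt⟩ : Fin n) + 1 ≤ m (⟨N, hNlt⟩ : Fin n) := by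
      have h2 := ((hB (⟨N, hNlt⟩ : Fin n)).1 (by simp; omega)).1 j
      rw [MM_eq n m _ (by simpa using hN)] at h2
      omega
    obtain ⟨j₀, hj₀ne, hj₀pos⟩ := exists_pos_ne (fun jj => B jj (⟨N, hNlt⟩ : Fin n)) j _ hs hub
    refine ⟨⟨N, hNlt⟩, j₀, by simp, fun jj kk => ?_⟩
    rcases Nat.lt_trichotomy kk.val N with hlt|heq|hgt
    · have hBeq : B jj kk = Ast jj kk := hD kk hlt jj
      rw [if_pos hlt, if_neg (by rintro ⟨-, rfl⟩; simp at hlt)]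
      have hw := hW1 jj kk hlt
      have hub' := hAstub jj kk hlt
      have hd := m_lt_dd n m kk
      omega
    · have hkk : kk = (⟨N, hNlt⟩ : Fin n) := Fin.ext heq
      subst hkk
      by_cases hjj : jj = j₀
      · subst hjj
        rw [if_neg (by simp), if_pos ⟨rfl, rfl⟩]
        have hval : (⟨N, hNlt⟩ : Fin n).val = N := rfl
        have hw := hW3 jj (⟨N, hNlt⟩ : Fin n) hj₀ne rfl
        have hpos : 1 ≤ B jj (⟨N, hNlt⟩ : Fin n) := hj₀pos
        omega
      · rw [if_neg (by simp), if_neg (by tauto)]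
        omega
    · rw [if_neg (show ¬ (kk.val < N) by omega), if_neg (by rintro ⟨-, rfl⟩; exact lt_irrefl N hgt)]
      omega
lemma pat_eq (k₀ : Fin n) (j₀ : Fin g) :
    Xpow K g n m (fun jj kk => (if kk.val < k₀.val then dd n m kk - 1 else 0)
        + (if jj = j₀ ∧ kk = k₀ then dd n m k₀ else 0))
      = Xpow K g n m (fun _ k' => if k'.val < k₀.val then dd n m k' - 1 else 0)
          * xv K g n m j₀ k₀ ^ dd n m k₀ := by
  rw [Xpow_mul_xv]

lemma mem_of_pat_le (hn : 0 < n) (k₀ : Fin n) (j₀ : Fin g) (F : Fin g → Fin n → ℕ)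
    (hbase : Xpow K g n m (fun _ k' => if k'.val < k₀.val then dd n m k' - 1 else 0)
        * xv K g n m j₀ k₀ ^ dd n m k₀ ∈ paperIdeal K g n m hn)
    (hge : ∀ (jj : Fin g) (kk : Fin n),
        (if kk.val < k₀.val then dd n m kk - 1 else 0)
          + (if jj = j₀ ∧ kk = k₀ then dd n m k₀ else 0) ≤ F jj kk) :
    Xpow K g n m F ∈ paperIdeal K g n m hn := by
  rw [Xpow_factor K g n m F _ hge, pat_eq]
  exact Ideal.mul_mem_left _ _ hbase

lemma mem_of_pat_le_y (hn : 0 < n) (k₀ : Fin n) (j₀ : Fin g)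
    (Wm Bm : Fin g → Fin n → ℕ) (q : {A : Fin g → Fin n → ℕ // A ∈ 𝒜 g n m n})
    (hbase : Xpow K g n m (fun _ k' => if k'.val < k₀.val then dd n m k' - 1 else 0)
        * xv K g n m j₀ k₀ ^ dd n m k₀ ∈ paperIdeal K g n m hn)
    (hge : ∀ (jj : Fin g) (kk : Fin n),
        (if kk.val < k₀.val then dd n m kk - 1 else 0)
          + (if jj = j₀ ∧ kk = k₀ then dd n m k₀ else 0) ≤ Wm jj kk + Bm jj kk) :
    Xpow K g n m Wm * (Xpow K g n m Bm * yv K g n m q) ∈ paperIdeal K g n m hn := by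
  have h1 : Xpow K g n m Wm * (Xpow K g n m Bm * yv K g n m q)
      = (Xpow K g n m (fun jj kk => (Wm jj kk + Bm jj kk)
            - ((if kk.val < k₀.val then dd n m kk - 1 else 0)
                + (if jj = j₀ ∧ kk = k₀ then dd n m k₀ else 0))) * yv K g n m q)
          * (Xpow K g n m (fun _ k' => if k'.val < k₀.val then dd n m k' - 1 else 0)
              * xv K g n m j₀ k₀ ^ dd n m k₀) := by
    rw [show Xpow K g n m Wm * (Xpow K g n m Bm * yv K g n m q)
        = (Xpow K g n m Wm * Xpow K g n m Bm) * yv K g n m q from by ring,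
      Xpow_mul, Xpow_factor K g n m _ _ hge, pat_eq]
    ring
  rw [h1]
  exact Ideal.mul_mem_left _ _ hbase

lemma sum_peel_mem {R : Type*} [CommRing R] (I : Ideal R) {α β γ : Type*}
    [Fintype α] [Fintype γ]
    (sA : α → Finset β) (t : α → β → γ → R) (w Z : R)
    (a₀ : α) (b₀ : β) (hb₀ : b₀ ∈ sA a₀) (c₀ : γ)
    (hjunk : ∀ a, ∀ b ∈ sA a, ∀ c, ¬(a = a₀ ∧ b = b₀ ∧ c = c₀) → w * t a b c ∈ I)
    (hw : w * ((∑ a, ∑ b ∈ sA a, ∑ c, t a b c) + Z) ∈ I) (hZ : w * Z ∈ I) :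
    w * t a₀ b₀ c₀ ∈ I := by
  classical
  have hmulsum : w * (∑ a, ∑ b ∈ sA a, ∑ c, t a b c)
      = ∑ a, ∑ b ∈ sA a, ∑ c, w * t a b c := by
    simp [Finset.mul_sum]
  have e2 := Finset.sum_erase_add Finset.univ
    (fun a => ∑ b ∈ sA a, ∑ c, w * t a b c) (Finset.mem_univ a₀)
  have e4 := Finset.sum_erase_add (sA a₀) (fun b => ∑ c, w * t a₀ b c) hb₀
  have e6 := Finset.sum_erase_add Finset.univ (fun c => w * t a₀ b₀ c) (Finset.mem_univ c₀)
  have hJ1 : ∑ a ∈ Finset.univ.erase a₀, ∑ b ∈ sA a, ∑ c, w * t a b c ∈ I := by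
    refine Ideal.sum_mem _ fun a ha => Ideal.sum_mem _ fun b hb => Ideal.sum_mem _ fun c _ => ?_
    exact hjunk a b hb c (fun h => (Finset.mem_erase.1 ha).1 h.1)
  have hJ2 : ∑ b ∈ (sA a₀).erase b₀, ∑ c, w * t a₀ b c ∈ I := by
    refine Ideal.sum_mem _ fun b hb => Ideal.sum_mem _ fun c _ => ?_
    exact hjunk a₀ b (Finset.mem_of_mem_erase hb) c (fun h => (Finset.mem_erase.1 hb).1 h.2.1)
  have hJ3 : ∑ c ∈ Finset.univ.erase c₀, w * t a₀ b₀ c ∈ I := by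
    refine Ideal.sum_mem _ fun c hc => ?_
    exact hjunk a₀ b₀ hb₀ c (fun h => (Finset.mem_erase.1 hc).1 h.2.2)
  have key : w * t a₀ b₀ c₀
      = (w * ((∑ a, ∑ b ∈ sA a, ∑ c, t a b c) + Z) - w * Z
          - (∑ a ∈ Finset.univ.erase a₀, ∑ b ∈ sA a, ∑ c, w * t a b c))
          - (∑ b ∈ (sA a₀).erase b₀, ∑ c, w * t a₀ b c)
          - (∑ c ∈ Finset.univ.erase c₀, w * t a₀ b₀ c) := by
    linear_combination e2 + e4 + e6 - hmulsum
  rw [key]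
  exact Ideal.sub_mem _ (Ideal.sub_mem _ (Ideal.sub_mem _
    (Ideal.sub_mem _ hw hZ) hJ1) hJ2) hJ3

/-- the key Lemma.  For `0 ≤ k ≤ n - 1` (zero-indexed: `k : Fin n`),
let `E_k` be the `g × n` matrix whose first `k` columns (zero-indexed: columns `k' < k`)
have all entries equal to `d_{k'} - 1`, and whose other entries vanish.  Then
`X^{E_k} · x_{j,k+1}^{d_{k+1}}` (zero-indexed: `X^{E_k} · x_{j,k}^{d_k}`) lies in
`I_{g,(m_1,…,m_n)}` for every `j`. -/
theorem statement0 (hg : 2 ≤ g) (hn : 0 < n)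
    (hm2 : ∀ i : Fin n, i.val + 2 < n → 2 ≤ m i)
    (hm1 : ∀ i : Fin n, i.val + 2 = n → 1 ≤ m i)
    (k : Fin n) (j : Fin g) :
    Xpow K g n m (fun _ k' => if k'.val < k.val then dd n m k' - 1 else 0)
        * xv K g n m j k ^ dd n m k
      ∈ paperIdeal K g n m hn := by
  suffices H : ∀ N : ℕ, ∀ k : Fin n, k.val ≤ N → ∀ j : Fin g,
      Xpow K g n m (fun _ k' => if k'.val < k.val then dd n m k' - 1 else 0)
        * xv K g n m j k ^ dd n m k ∈ paperIdeal K g n m hn by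
    exact H k.val k le_rfl j
  intro N
  induction N with
  | zero =>
    intro k hk j
    have hE : (fun (_ : Fin g) (k' : Fin n) => if k'.val < k.val then dd n m k' - 1 else 0)
        = fun _ _ => 0 := by
      funext jj kk
      rw [if_neg (by omega)]
    rw [hE, Xpow_zero, one_mul, show k = (⟨0, hn⟩ : Fin n) from Fin.ext (show k.val = 0 by omega)]
    exact Ideal.subset_span (Or.inl ⟨j, rfl⟩)
  | succ N ihN =>
    intro k hk j
    rcases Nat.lt_or_ge k.val (N + 1) with hlt'|hge'
    · exact ihN k (by omega) j
    · have hkv : k.val = N + 1 := by omega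
      have hNn : N + 1 < n := by omega
      have hNn1 : N < n - 1 := by omega
      have hNlt : N < n := by omega
      -- the chosen matrix A* ∈ 𝒜_N
      set Ast : Fin g → Fin n → ℕ := fun (jj : Fin g) (kk : Fin n) =>
        if kk.val < N ∧ jj = (⟨0, by omega⟩ : Fin g) then m kk - 1
        else if kk.val < N ∧ jj = (⟨1, by omega⟩ : Fin g) then 1 else 0 with hAstdef
      have hAstmem : Ast ∈ 𝒜 g n m N := Astar_mem g n m hg hm2 N hNn
      have hAst : mem𝒜 g n m N Ast := mem𝒜_of_mem g n m hAstmem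
      -- the multiplier matrix W
      set W : Fin g → Fin n → ℕ := fun (jj : Fin g) (kk : Fin n) =>
        if kk.val < N then dd n m kk - 1 - Ast jj kk
        else if kk.val = N then
          (if jj = j then dd n m kk - 1 - m kk else dd n m kk - 1)
        else 0 with hWdef
      have hW1 : ∀ (jj : Fin g) (kk : Fin n), kk.val < N →
          W jj kk = dd n m kk - 1 - Ast jj kk := by
        intro jj kk h
        simp only [hWdef]
        rw [if_pos h]
      have hW2 : ∀ kk : Fin n, kk.val = N → W j kk = dd n m kk - 1 - m kk := by
        intro kk h
        simp only [hWdef]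
        rw [if_neg (by omega), if_pos h]
        simp
      have hW3 : ∀ (jj : Fin g) (kk : Fin n), jj ≠ j → kk.val = N →
          W jj kk = dd n m kk - 1 := by
        intro jj kk hj h
        simp only [hWdef]
        rw [if_neg (by omega), if_pos h, if_neg hj]
      have hW4 : ∀ (jj : Fin g) (kk : Fin n), N < kk.val → W jj kk = 0 := by
        intro jj kk h
        simp only [hWdef]
        rw [if_neg (by omega), if_neg (by omega)]
      have hAst0 : ∀ (jj : Fin g) (kk : Fin n), N ≤ kk.val → Ast jj kk = 0 :=
        fun jj kk h => (hAst kk).2 h jj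
      have hAstub2 : ∀ (jj : Fin g) (kk : Fin n), kk.val < N → Ast jj kk + 1 ≤ m kk := by
        intro jj kk h
        have h1 := ((hAst kk).1 h).1 jj
        rw [MM_eq n m kk (by omega)] at h1
        have := hm2 kk (by omega)
        omega
      -- the special term equals the goal monomial
      have hSp : Xpow K g n m W
            * (Xpow K g n m Ast
                * xv K g n m j (⟨N, hNlt⟩ : Fin n) ^ m (⟨N, hNlt⟩ : Fin n)
                * xv K g n m j (⟨N + 1, hNn⟩ : Fin n) ^ dd n m (⟨N + 1, hNn⟩ : Fin n))
          = Xpow K g n m (fun _ k' => if k'.val < k.val then dd n m k' - 1 else 0)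
              * xv K g n m j k ^ dd n m k := by
        rw [expand4, Xpow_mul_xv]
        congr 1
        funext jj kk
        rcases Nat.lt_trichotomy kk.val N with hlt|heq|hgt
        · rw [if_neg (by rintro ⟨-, rfl⟩; exact lt_irrefl N hlt),
            if_neg (by rintro ⟨-, rfl⟩; exact absurd (Nat.lt_of_succ_lt hlt) (lt_irrefl N)),
            if_pos (show kk.val < k.val by omega),
            if_neg (by rintro ⟨-, rfl⟩; omega),
            hW1 jj kk hlt]
          have h1 := hAstub2 jj kk hlt
          have h2 := m_lt_dd n m kk
          omega
        · have hkkeq : kk = (⟨N, hNlt⟩ : Fin n) := Fin.ext heq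
          rw [hkkeq]
          by_cases hjj : jj = j
          · subst hjj
            rw [if_pos ⟨rfl, rfl⟩,
              if_neg (by rintro ⟨-, hc⟩; have h9 : N = N + 1 := congrArg Fin.val hc; omega),
              if_pos (show N < k.val by omega),
              if_neg (by rintro ⟨-, hc⟩; have h9 : N = k.val := congrArg Fin.val hc; omega),
              hW2 (⟨N, hNlt⟩ : Fin n) rfl, hAst0 jj (⟨N, hNlt⟩ : Fin n) (le_refl N)]
            have h2 := m_lt_dd n m (⟨N, hNlt⟩ : Fin n)
            omega
          · rw [if_neg (by tauto), if_neg (by tauto),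
              if_pos (show N < k.val by omega),
              if_neg (by rintro ⟨hc, -⟩; exact hjj hc),
              hW3 jj (⟨N, hNlt⟩ : Fin n) hjj rfl, hAst0 jj (⟨N, hNlt⟩ : Fin n) (le_refl N)]
        · rcases Nat.lt_or_ge kk.val (N + 2) with h2|h2
          · have hkkeq : kk = k := Fin.ext (by omega)
            rw [hkkeq]
            by_cases hjj : jj = j
            · subst hjj
              rw [if_neg (by rintro ⟨-, hc⟩; have h9 : k.val = N := congrArg Fin.val hc; omega),
                if_pos ⟨rfl, Fin.ext hkv⟩,
                if_neg (lt_irrefl _),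
                if_pos ⟨rfl, rfl⟩,
                hW4 jj k (by omega), hAst0 jj k (by omega),
                show (⟨N + 1, hNn⟩ : Fin n) = k from Fin.ext hkv.symm]
            · rw [if_neg (by tauto), if_neg (by tauto), if_neg (lt_irrefl _),
                if_neg (by rintro ⟨hc, -⟩; exact hjj hc),
                hW4 jj k (by omega), hAst0 jj k (by omega)]
          · rw [if_neg (by rintro ⟨-, rfl⟩; exact lt_irrefl N hgt),
              if_neg (by rintro ⟨-, rfl⟩; have h9 : N + 2 ≤ N + 1 := h2; omega),
              if_neg (show ¬ kk.val < k.val by omega),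
              if_neg (by rintro ⟨-, rfl⟩; omega),
              hW4 jj kk (by omega), hAst0 jj kk (by omega)]
      -- peel the special term out of W * f
      have hpeel : Xpow K g n m W
          * ((fun (κ : Fin (n - 1)) (A : Fin g → Fin n → ℕ) (j' : Fin g) =>
                Xpow K g n m A
                  * xv K g n m j' ⟨κ.val, by have := κ.isLt; omega⟩ ^
                      m ⟨κ.val, by have := κ.isLt; omega⟩
                  * xv K g n m j' ⟨κ.val + 1, by have := κ.isLt; omega⟩ ^
                      dd n m ⟨κ.val + 1, by have := κ.isLt; omega⟩)
              (⟨N, hNn1⟩ : Fin (n - 1)) Ast j) ∈ paperIdeal K g n m hn := by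
        refine sum_peel_mem (paperIdeal K g n m hn)
          (fun κ : Fin (n - 1) => 𝒜 g n m κ.val)
          (fun (κ : Fin (n - 1)) (A : Fin g → Fin n → ℕ) (j' : Fin g) =>
            Xpow K g n m A
              * xv K g n m j' ⟨κ.val, by have := κ.isLt; omega⟩ ^
                  m ⟨κ.val, by have := κ.isLt; omega⟩
              * xv K g n m j' ⟨κ.val + 1, by have := κ.isLt; omega⟩ ^
                  dd n m ⟨κ.val + 1, by have := κ.isLt; omega⟩)
          (Xpow K g n m W)
          (∑ B : {A : Fin g → Fin n → ℕ // A ∈ 𝒜 g n m n},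
            Xpow K g n m B.1 * yv K g n m B)
          (⟨N, hNn1⟩ : Fin (n - 1)) Ast hAstmem j ?_ ?_ ?_
        · -- junk terms
          intro κ A hA j' hne
          have hA' : mem𝒜 g n m κ.val A := mem𝒜_of_mem g n m hA
          have hκn : κ.val + 1 < n := by have := κ.isLt; omega
          obtain ⟨k₀, j₀, hk₀, hge⟩ := find_x g n m hm2 hm1 N hNn j Ast hAst W hW1 hW3
            κ.val hκn A hA' j'
            (fun h => hne ⟨Fin.ext (show κ.val = N from h.1), h.2.1, h.2.2⟩)
          rw [expand4]
          exact mem_of_pat_le K g n m hn k₀ j₀ _ (ihN k₀ hk₀ j₀) hge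
        · -- W * f ∈ I
          exact Ideal.mul_mem_left _ _ (Ideal.subset_span (Or.inr rfl))
        · -- W * (y-part) ∈ I
          rw [Finset.mul_sum]
          refine Ideal.sum_mem _ fun B _ => ?_
          obtain ⟨k₀, j₀, hk₀, hge⟩ := find_y g n m hm2 hm1 N hNn j Ast hAst W hW1 hW3
            B.1 (mem𝒜_of_mem g n m B.2)
          exact mem_of_pat_le_y K g n m hn k₀ j₀ W B.1 B (ihN k₀ hk₀ j₀) hge
      dsimp only at hpeel
      rw [← hSp]
      exact hpeel

end Paper
end
end

section
/- Let I = I_{g,(m_1,…,m_n)} ⊆ R and set S = Π_{j,k} x_{j,k}^{d_k − 1}. Then for every matrix A ∈ A_n, the product y_A · S lies in I. -/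
open MvPolynomial Finset

noncomputable section

namespace Paper

open scoped Classical

variable (K : Type) [Field K] (g n : ℕ) (m : Fin n → ℕ)

/-- The socle witness `S = ∏_{j,k} x_{j,k}^{d_k - 1}`. -/
def SS : MvPolynomial (Var g n m) K := Xpow K g n m fun _ k => dd n m k - 1

/-! ### Auxiliary machinery -/

instance : Fintype (Var g n m) :=
  inferInstanceAs (Fintype ((Fin g × Fin n) ⊕ {A : Fin g → Fin n → ℕ // A ∈ 𝒜 g n m n}))

/-- A monomial given by an exponent function. -/
def mono (e : Var g n m → ℕ) : MvPolynomial (Var g n m) K := ∏ v, X v ^ e v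

lemma mono_add (e₁ e₂ : Var g n m → ℕ) :
    mono K g n m (fun v => e₁ v + e₂ v) = mono K g n m e₁ * mono K g n m e₂ := by
  simp [mono, pow_add, Finset.prod_mul_distrib]

lemma X_pow_eq (v₀ : Var g n m) (t : ℕ) :
    (X v₀ : MvPolynomial (Var g n m) K) ^ t
      = mono K g n m (fun v => if v = v₀ then t else 0) := by
  rw [mono]
  rw [show (∏ v, (X v : MvPolynomial (Var g n m) K) ^ (if v = v₀ then t else 0))
      = ∏ v, (if v = v₀ then (X v : MvPolynomial (Var g n m) K) ^ t else 1) by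
    refine Finset.prod_congr rfl fun v _ => ?_
    split_ifs <;> simp]
  simp

/-- Exponent function of the monomial `X^A`. -/
def exA (A : Fin g → Fin n → ℕ) : Var g n m → ℕ :=
  fun v => match v with
  | .inl p => A p.1 p.2
  | .inr _ => 0

lemma Xpow_eq (A : Fin g → Fin n → ℕ) : Xpow K g n m A = mono K g n m (exA g n m A) := by
  rw [mono]
  rw [show (∏ v : Var g n m, (X v : MvPolynomial (Var g n m) K) ^ exA g n m A v)
      = ∏ v : (Fin g × Fin n) ⊕ {B : Fin g → Fin n → ℕ // B ∈ 𝒜 g n m n},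
          (X (v : Var g n m) : MvPolynomial (Var g n m) K) ^ exA g n m A v from rfl]
  rw [Fintype.prod_sum_type]
  simp only [exA, pow_zero, Finset.prod_const_one, mul_one]
  rw [Fintype.prod_prod_type]
  rfl

/-- Exponent function of a single variable power. -/
def sing (v₀ : Var g n m) (t : ℕ) : Var g n m → ℕ := fun v => if v = v₀ then t else 0

lemma sing_eq (v₀ : Var g n m) (t : ℕ) :
    (X v₀ : MvPolynomial (Var g n m) K) ^ t = mono K g n m (sing g n m v₀ t) :=
  X_pow_eq K g n m v₀ t

lemma mono_mul_mono (e₁ e₂ : Var g n m → ℕ) :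
    mono K g n m e₁ * mono K g n m e₂ = mono K g n m (fun v => e₁ v + e₂ v) :=
  (mono_add K g n m e₁ e₂).symm

lemma mono_mem_of_le {e₁ e₂ : Var g n m → ℕ} (h : ∀ v, e₁ v ≤ e₂ v) {hn : 0 < n}
    (hm : mono K g n m e₁ ∈ paperIdeal K g n m hn) :
    mono K g n m e₂ ∈ paperIdeal K g n m hn := by
  have : mono K g n m e₂ = mono K g n m e₁ * mono K g n m (fun v => e₂ v - e₁ v) := by
    rw [mono_mul_mono]
    congr 1
    funext v
    have := h v
    omega
  rw [this]
  exact Ideal.mul_mem_right _ _ hm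

lemma f_mem (hn : 0 < n) : ff K g n m ∈ paperIdeal K g n m hn :=
  Ideal.subset_span (Or.inr rfl)

lemma gen_mem (hn : 0 < n) (j : Fin g) :
    xv K g n m j ⟨0, hn⟩ ^ dd n m ⟨0, hn⟩ ∈ paperIdeal K g n m hn :=
  Ideal.subset_span (Or.inl ⟨j, rfl⟩)

/-- Base case: any monomial whose `x_{j,0}` exponent is at least `d₀` lies in `I`. -/
lemma base_mem (hn : 0 < n) (j : Fin g) {e : Var g n m → ℕ}
    (h : dd n m ⟨0, hn⟩ ≤ e (.inl (j, ⟨0, hn⟩))) :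
    mono K g n m e ∈ paperIdeal K g n m hn := by
  refine mono_mem_of_le K g n m (e₁ := sing g n m (.inl (j, ⟨0, hn⟩)) (dd n m ⟨0, hn⟩))
    (fun v => ?_) ?_
  · simp only [sing]
    split_ifs with hv
    · subst hv; exact h
    · exact Nat.zero_le _
  · erw [← sing_eq]
    exact gen_mem K g n m hn j

/-- Inclusion `Fin (n-1) → Fin n`. -/
def bι (b : Fin (n - 1)) : Fin n := ⟨b.val, by have := b.isLt; omega⟩

/-- Successor inclusion `Fin (n-1) → Fin n`. -/
def bι' (b : Fin (n - 1)) : Fin n := ⟨b.val + 1, by have := b.isLt; omega⟩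

/-- Exponent function of a term of the `x`-part of `f`. -/
def wx (b : Fin (n - 1)) (A : Fin g → Fin n → ℕ) (j : Fin g) : Var g n m → ℕ :=
  fun v => exA g n m A v + sing g n m (.inl (j, bι n b)) (m (bι n b)) v
    + sing g n m (.inl (j, bι' n b)) (dd n m (bι' n b)) v

/-- Exponent function of a term of the `y`-part of `f`. -/
def wy (B : {A : Fin g → Fin n → ℕ // A ∈ 𝒜 g n m n}) : Var g n m → ℕ :=
  fun v => exA g n m B.1 v + sing g n m (.inr B) 1 v

lemma f_eq :
    ff K g n m
      = (∑ b : Fin (n - 1), ∑ A ∈ 𝒜 g n m b.val, ∑ j : Fin g,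
          mono K g n m (wx g n m b A j))
        + ∑ B : {A : Fin g → Fin n → ℕ // A ∈ 𝒜 g n m n}, mono K g n m (wy g n m B) := by
  rw [ff]
  congr 1
  · refine Finset.sum_congr rfl fun b _ => Finset.sum_congr rfl fun A _ =>
      Finset.sum_congr rfl fun j _ => ?_
    erw [xv, xv, Xpow_eq, X_pow_eq, X_pow_eq]
    exact (congrArg (· * _) (mono_mul_mono K g n m _ _)).trans (mono_mul_mono K g n m _ _)
  · refine Finset.sum_congr rfl fun B _ => ?_
    erw [yv, Xpow_eq, show (X (Sum.inr B) : MvPolynomial (Var g n m) K)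
        = X (Sum.inr B) ^ 1 from (pow_one _).symm, X_pow_eq, mono_mul_mono]
    rfl

lemma dd_pos (k : Fin n) : 0 < dd n m k := by rw [dd]; omega

lemma dd_succ (k : Fin n) (h : k.val + 1 < n) :
    dd n m k = m k + dd n m ⟨k.val + 1, h⟩ := by
  rw [dd, dd]
  have hins : Finset.Ici k = insert k (Finset.Ici (⟨k.val + 1, h⟩ : Fin n)) := by
    ext k'
    simp only [Finset.mem_Ici, Finset.mem_insert, Fin.le_def, Fin.ext_iff]
    omega
  rw [hins, Finset.sum_insert (by simp [Finset.mem_Ici, Fin.le_def])]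
  omega

lemma MM_le (k : Fin n) : MM n m k ≤ m k := by
  rw [MM]; split <;> omega

lemma 𝒜_colsum {kk : ℕ} {A : Fin g → Fin n → ℕ} (hA : A ∈ 𝒜 g n m kk)
    {k' : Fin n} (h : k'.val < kk) : ∑ j, A j k' = m k' :=
  (((Finset.mem_filter.mp hA).2 k').1 h).2

lemma 𝒜_entry_le {kk : ℕ} {A : Fin g → Fin n → ℕ} (hA : A ∈ 𝒜 g n m kk)
    {k' : Fin n} (h : k'.val < kk) (j : Fin g) : A j k' ≤ MM n m k' :=
  (((Finset.mem_filter.mp hA).2 k').1 h).1 j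

lemma 𝒜_entry_le_m {kk : ℕ} {A : Fin g → Fin n → ℕ} (hA : A ∈ 𝒜 g n m kk)
    {k' : Fin n} (h : k'.val < kk) (j : Fin g) : A j k' ≤ m k' :=
  le_trans (𝒜_entry_le g n m hA h j) (MM_le n m k')

lemma 𝒜_entry_le' {kk : ℕ} {A : Fin g → Fin n → ℕ} (hA : A ∈ 𝒜 g n m kk)
    {k' : Fin n} (h : k'.val < kk) (h2 : k'.val + 1 < n) (j : Fin g) :
    A j k' ≤ m k' - 1 := by
  have := 𝒜_entry_le g n m hA h j
  rwa [MM, if_neg (by omega)] at this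

lemma 𝒜_zero {kk : ℕ} {A : Fin g → Fin n → ℕ} (hA : A ∈ 𝒜 g n m kk)
    {k' : Fin n} (h : kk ≤ k'.val) (j : Fin g) : A j k' = 0 :=
  ((Finset.mem_filter.mp hA).2 k').2 h j

lemma 𝒜_mem_of {kk : ℕ} {A : Fin g → Fin n → ℕ} (h : mem𝒜 g n m kk A) :
    A ∈ 𝒜 g n m kk := by
  refine Finset.mem_filter.mpr ⟨?_, h⟩
  refine Fintype.mem_piFinset.mpr fun j => Fintype.mem_piFinset.mpr fun k' => ?_
  rw [Finset.mem_range, Nat.lt_succ_iff]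
  rcases Nat.lt_or_ge k'.val kk with h'|h'
  · exact le_trans (((h k').1 h').1 j) (MM_le n m k')
  · rw [(h k').2 h' j]; exact Nat.zero_le _

/-- Restriction of a matrix to the columns `< c`. -/
def resA (A : Fin g → Fin n → ℕ) (c : ℕ) : Fin g → Fin n → ℕ :=
  fun j k' => if k'.val < c then A j k' else 0

lemma resA_mem {A : Fin g → Fin n → ℕ} (hA : A ∈ 𝒜 g n m n) (c : ℕ) :
    resA g n A c ∈ 𝒜 g n m c := by
  refine 𝒜_mem_of g n m fun k' => ⟨fun h => ⟨fun j => ?_, ?_⟩, fun h j => ?_⟩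
  · rw [resA, if_pos h]; exact 𝒜_entry_le g n m hA k'.isLt j
  · rw [show (∑ j, resA g n A c j k') = ∑ j, A j k' from
      Finset.sum_congr rfl fun j _ => by rw [resA, if_pos h]]
    exact 𝒜_colsum g n m hA k'.isLt
  · rw [resA, if_neg (by omega)]

lemma m_two (hm2 : ∀ i : Fin n, i.val + 2 < n → 2 ≤ m i)
    (hm1 : ∀ i : Fin n, i.val + 2 = n → 1 ≤ m i)
    {A : Fin g → Fin n → ℕ} (hA : A ∈ 𝒜 g n m n) (k' : Fin n) (h : k'.val + 2 ≤ n) :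
    2 ≤ m k' := by
  rcases Nat.lt_or_ge (k'.val + 2) n with h'|h'
  · exact hm2 k' h'
  · have hn1 : k'.val + 2 = n := le_antisymm h h'
    have h1 := hm1 k' hn1
    by_contra hcon
    have hm1' : m k' = 1 := by omega
    have hz : ∀ j, A j k' = 0 := fun j => by
      have h2 := 𝒜_entry_le g n m hA k'.isLt j
      rw [MM, if_neg (by omega), hm1'] at h2
      omega
    have hcs := 𝒜_colsum g n m hA k'.isLt
    rw [Finset.sum_eq_zero (fun j _ => hz j)] at hcs
    omega

lemma exists_other_row {kk : ℕ} {A : Fin g → Fin n → ℕ} (hA : A ∈ 𝒜 g n m kk)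
    (k' : Fin n) (h1 : k'.val < kk) (h2 : k'.val + 1 < n) (hm' : 1 ≤ m k') (j : Fin g) :
    ∃ j', j' ≠ j ∧ 1 ≤ A j' k' := by
  by_contra hcon
  push_neg at hcon
  have hsum := 𝒜_colsum g n m hA h1
  have hsingle : ∑ j'', A j'' k' = A j k' :=
    Finset.sum_eq_single j (fun b _ hb => by have := hcon b hb; omega) (by simp)
  have hle := 𝒜_entry_le' g n m hA h1 h2 j
  omega

lemma exists_gt {kk : ℕ} {A A' : Fin g → Fin n → ℕ} (hA : A ∈ 𝒜 g n m kk)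
    (hA' : A' ∈ 𝒜 g n m kk) (hne : A' ≠ A) :
    ∃ (j' : Fin g) (k' : Fin n), k'.val < kk ∧ A j' k' + 1 ≤ A' j' k' := by
  by_contra hcon
  push_neg at hcon
  apply hne
  have hle : ∀ (p : Fin g × Fin n), A' p.1 p.2 ≤ A p.1 p.2 := fun p => by
    rcases Nat.lt_or_ge p.2.val kk with h|h
    · have := hcon p.1 p.2 h; omega
    · rw [𝒜_zero g n m hA' h, 𝒜_zero g n m hA h]
  have hsums : ∑ p : Fin g × Fin n, A' p.1 p.2 = ∑ p : Fin g × Fin n, A p.1 p.2 := by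
    rw [Fintype.sum_prod_type_right, Fintype.sum_prod_type_right]
    refine Finset.sum_congr rfl fun k' _ => ?_
    rcases Nat.lt_or_ge k'.val kk with h|h
    · rw [𝒜_colsum g n m hA' h, 𝒜_colsum g n m hA h]
    · rw [Finset.sum_eq_zero (fun j _ => 𝒜_zero g n m hA' h j),
        Finset.sum_eq_zero (fun j _ => 𝒜_zero g n m hA h j)]
  have hpt := (Finset.sum_eq_sum_iff_of_le (fun p _ => hle p)).mp hsums
  funext j k'
  exact hpt (j, k') (Finset.mem_univ _)

lemma colsum_helper (t s : ℕ) (a b : Fin g → ℕ) (hb : ∀ j', b j' ≤ t)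
    (hsb : ∑ j', b j' = s) (hsa : s ≤ ∑ j', a j') :
    g * t ≤ ∑ j', (a j' + (t - b j')) := by
  have h2 : (∑ _j' : Fin g, t) ≤ ∑ j', (b j' + (t - b j')) :=
    Finset.sum_le_sum (fun i _ => by have := hb i; omega)
  have h3 : ∑ j', (b j' + (t - b j')) = s + ∑ j', (t - b j') := by
    rw [Finset.sum_add_distrib, hsb]
  have h4 : ∑ j' : Fin g, (a j' + (t - b j')) = (∑ j', a j') + ∑ j', (t - b j') :=
    Finset.sum_add_distrib
  have h5 : (∑ _j' : Fin g, t) = g * t := by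
    rw [Finset.sum_const, Finset.card_univ, Fintype.card_fin, smul_eq_mul]
  omega

/-- The key notion: `e` has a "surplus" at position `(j,k)` (exponent at least `d_k`),
while on all earlier columns it has pointwise at least `d_{k'+1}` and column sum at
least `g (d_{k'} - 1)`. -/
def Good (k : Fin n) (j : Fin g) (e : Var g n m → ℕ) : Prop :=
  dd n m k ≤ e (.inl (j, k)) ∧
  ∀ k' : Fin n, (hlt : k'.val < k.val) →
    (∀ j', dd n m ⟨k'.val + 1, by have := k.isLt; omega⟩ ≤ e (.inl (j', k'))) ∧
    g * (dd n m k' - 1) ≤ ∑ j', e (.inl (j', k'))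

/-- The multiplier monomial used in the inductive step. -/
def uFun (cv : ℕ) (Astar : Fin g → Fin n → ℕ) (j : Fin g) : Var g n m → ℕ :=
  fun v => match v with
  | .inl p =>
      if p.2.val < cv then dd n m p.2 - 1 - Astar p.1 p.2
      else if p.2.val = cv then
        (if p.1 = j then dd n m p.2 - 1 - m p.2 else dd n m p.2 - 1)
      else 0
  | .inr _ => 0

lemma good_of_step (hm : ∀ k' : Fin n, k'.val + 2 ≤ n → 2 ≤ m k')
    (cv : ℕ) {Astar : Fin g → Fin n → ℕ} (hAstar : Astar ∈ 𝒜 g n m cv) (j : Fin g)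
    (k₀ : Fin n) (j₀ : Fin g) (hk₀ : k₀.val ≤ cv) (w : Var g n m → ℕ)
    (h1 : dd n m k₀ ≤ w (.inl (j₀, k₀)) + uFun g n m cv Astar j (.inl (j₀, k₀)))
    (hw : ∀ k'' : Fin n, k''.val < k₀.val → m k'' ≤ ∑ j', w (.inl (j', k''))) :
    Good g n m k₀ j₀ (fun v => w v + uFun g n m cv Astar j v) := by
  refine ⟨h1, fun k'' hlt => ?_⟩
  have hk''cv : k''.val < cv := lt_of_lt_of_le hlt hk₀
  have hu : ∀ j', uFun g n m cv Astar j (.inl (j', k'')) = dd n m k'' - 1 - Astar j' k'' :=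
    fun j' => by rw [uFun]; simp only; rw [if_pos hk''cv]
  have h2n : k''.val + 1 < n := by have := k₀.isLt; omega
  have hb : ∀ j', Astar j' k'' ≤ m k'' - 1 :=
    fun j' => 𝒜_entry_le' g n m hAstar hk''cv h2n j'
  have hm2 : 2 ≤ m k'' := hm k'' (by omega)
  have hds : dd n m k'' = m k'' + dd n m ⟨k''.val + 1, h2n⟩ := dd_succ n m k'' h2n
  have hdp : 0 < dd n m ⟨k''.val + 1, h2n⟩ := dd_pos n m _
  constructor
  · intro j'
    have : dd n m ⟨k''.val + 1, h2n⟩ ≤ uFun g n m cv Astar j (.inl (j', k'')) := by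
      rw [hu j']
      have := hb j'
      omega
    exact le_trans this (Nat.le_add_left _ _)
  · have hrw : ∑ j', (w (.inl (j', k'')) + uFun g n m cv Astar j (.inl (j', k'')))
        = ∑ j', (w (.inl (j', k'')) + (dd n m k'' - 1 - Astar j' k'')) :=
      Finset.sum_congr rfl fun j' _ => by rw [hu j']
    rw [hrw]
    refine colsum_helper g (dd n m k'' - 1) (m k'') _ (fun j' => Astar j' k'') ?_ ?_ ?_
    · intro j'
      show Astar j' k'' ≤ dd n m k'' - 1
      have := hb j'
      omega
    · exact 𝒜_colsum g n m hAstar hk''cv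
    · exact hw k'' hlt

lemma sing_self (v₀ : Var g n m) (t : ℕ) : sing g n m v₀ t v₀ = t := if_pos rfl

lemma exA_le_wx (b' : Fin (n - 1)) (A' : Fin g → Fin n → ℕ) (j'' j' : Fin g) (k' : Fin n) :
    A' j' k' ≤ wx g n m b' A' j'' (.inl (j', k')) :=
  le_trans (Nat.le_add_right _ _) (Nat.le_add_right _ _)

lemma sing1_le_wx (b' : Fin (n - 1)) (A' : Fin g → Fin n → ℕ) (j'' : Fin g) :
    m (bι n b') ≤ wx g n m b' A' j'' (.inl (j'', bι n b')) := by
  show m (bι n b') ≤ A' j'' (bι n b') + sing g n m _ _ _ + sing g n m _ _ _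
  erw [sing_self]
  omega

lemma sing2_le_wx (b' : Fin (n - 1)) (A' : Fin g → Fin n → ℕ) (j'' : Fin g) :
    dd n m (bι' n b') ≤ wx g n m b' A' j'' (.inl (j'', bι' n b')) := by
  show dd n m (bι' n b') ≤ A' j'' (bι' n b') + sing g n m _ _ _ + sing g n m (.inl (j'', bι' n b')) (dd n m (bι' n b')) (.inl (j'', bι' n b'))
  erw [sing_self]
  omega

lemma wx_colsum {kb : ℕ} {A' : Fin g → Fin n → ℕ} (hA' : A' ∈ 𝒜 g n m kb)
    (b' : Fin (n - 1)) (j'' : Fin g) (k'' : Fin n) (h : k''.val < kb) :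
    m k'' ≤ ∑ j', wx g n m b' A' j'' (.inl (j', k'')) := by
  have h1 := 𝒜_colsum g n m hA' h
  calc m k'' = ∑ j', A' j' k'' := h1.symm
    _ ≤ ∑ j', wx g n m b' A' j'' (.inl (j', k'')) :=
        Finset.sum_le_sum fun j' _ => exA_le_wx g n m b' A' j'' j' k''

lemma termx_mem (hn : 0 < n)
    (hm : ∀ k' : Fin n, k'.val + 2 ≤ n → 2 ≤ m k')
    (cv : ℕ) {Astar : Fin g → Fin n → ℕ} (hAstar : Astar ∈ 𝒜 g n m cv) (j : Fin g)
    (IH : ∀ (k' : Fin n) (j' : Fin g) (e : Var g n m → ℕ), k'.val ≤ cv →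
      Good g n m k' j' e → mono K g n m e ∈ paperIdeal K g n m hn)
    (b' : Fin (n - 1)) {A' : Fin g → Fin n → ℕ} (hA' : A' ∈ 𝒜 g n m b'.val) (j'' : Fin g)
    (hne : ¬ (b'.val = cv ∧ A' = Astar ∧ j'' = j)) :
    mono K g n m (fun v => wx g n m b' A' j'' v + uFun g n m cv Astar j v)
      ∈ paperIdeal K g n m hn := by
  have hbn : b'.val + 1 < n := by have := b'.isLt; omega
  rcases Nat.lt_trichotomy b'.val cv with hlt | heq | hgt
  · -- block strictly before column cv
    refine IH (bι' n b') j'' _ (by show b'.val + 1 ≤ cv; omega)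
      (good_of_step g n m hm cv hAstar j _ _ (by show b'.val + 1 ≤ cv; omega) _ ?_ ?_)
    · exact le_trans (sing2_le_wx g n m b' A' j'') (Nat.le_add_right _ _)
    · intro k'' hk''
      rcases Nat.lt_or_ge k''.val b'.val with h | h
      · exact wx_colsum g n m hA' b' j'' k'' h
      · have hkeq : k'' = bι n b' := Fin.ext (by show k''.val = b'.val; have : k''.val < b'.val + 1 := hk''; omega)
        subst hkeq
        refine le_trans (sing1_le_wx g n m b' A' j'') ?_
        exact Finset.single_le_sum (f := fun j' => wx g n m b' A' j'' (.inl (j', bι n b')))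
          (fun i _ => Nat.zero_le _) (Finset.mem_univ j'')
  · -- block at column cv
    have hA'cv : A' ∈ 𝒜 g n m cv := heq ▸ hA'
    by_cases hAeq : A' = Astar
    · -- same matrix, other row
      have hjne : j'' ≠ j := fun h => hne ⟨heq, hAeq, h⟩
      have hcv2 : cv + 2 ≤ n := by omega
      have hmc : 2 ≤ m (bι n b') := hm (bι n b') (by show b'.val + 2 ≤ n; omega)
      refine IH (bι n b') j'' _ (by show b'.val ≤ cv; omega)
        (good_of_step g n m hm cv hAstar j _ _ (by show b'.val ≤ cv; omega) _ ?_ ?_)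
      · have hbv : (bι n b').val = b'.val := rfl
        have hu : uFun g n m cv Astar j (.inl (j'', bι n b')) = dd n m (bι n b') - 1 := by
          rw [uFun]
          simp only
          rw [if_neg (show ¬ (bι n b').val < cv by omega), if_pos (show (bι n b').val = cv by omega),
            if_neg hjne]
        rw [hu]
        have := sing1_le_wx g n m b' A' j''
        have := dd_pos n m (bι n b')
        omega
      · intro k'' hk''
        exact wx_colsum g n m hA' b' j'' k'' hk''
    · -- different matrix at the same level
      obtain ⟨j₀, k₀, hk₀lt, hgtv⟩ := exists_gt g n m hAstar hA'cv hAeq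
      refine IH k₀ j₀ _ (le_of_lt hk₀lt)
        (good_of_step g n m hm cv hAstar j _ _ (le_of_lt hk₀lt) _ ?_ ?_)
      · have hu : uFun g n m cv Astar j (.inl (j₀, k₀)) = dd n m k₀ - 1 - Astar j₀ k₀ := by
          rw [uFun]; simp only; rw [if_pos hk₀lt]
        rw [hu]
        have h1 := exA_le_wx g n m b' A' j'' j₀ k₀
        have h2 : Astar j₀ k₀ ≤ m k₀ := 𝒜_entry_le_m g n m hAstar hk₀lt j₀
        have h3 := m_lt_dd n m k₀
        omega
      · intro k'' hk''
        exact wx_colsum g n m hA' b' j'' k'' (by omega)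
  · -- block strictly after column cv
    have hc : cv < n := by omega
    have hm2c : 2 ≤ m (⟨cv, hc⟩ : Fin n) := hm _ (by show cv + 2 ≤ n; omega)
    obtain ⟨j₀, hj₀ne, hj₀pos⟩ := exists_other_row g n m hA' ⟨cv, hc⟩ hgt (by show cv + 1 < n; omega)
      (by omega) j
    refine IH ⟨cv, hc⟩ j₀ _ (le_refl _)
      (good_of_step g n m hm cv hAstar j _ _ (le_refl _) _ ?_ ?_)
    · have hu : uFun g n m cv Astar j (.inl (j₀, (⟨cv, hc⟩ : Fin n))) = dd n m ⟨cv, hc⟩ - 1 := by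
        simp [uFun, hj₀ne]
      rw [hu]
      have h1 := exA_le_wx g n m b' A' j'' j₀ ⟨cv, hc⟩
      have h2 := dd_pos n m (⟨cv, hc⟩ : Fin n)
      omega
    · intro k'' hk''
      have hv : ((⟨cv, hc⟩ : Fin n)).val = cv := rfl
      exact wx_colsum g n m hA' b' j'' k'' (by omega)

lemma exA_le_wy (B : {A : Fin g → Fin n → ℕ // A ∈ 𝒜 g n m n}) (j' : Fin g) (k' : Fin n) :
    B.1 j' k' ≤ wy g n m B (.inl (j', k')) :=
  Nat.le_add_right _ _

lemma wy_colsum (B : {A : Fin g → Fin n → ℕ // A ∈ 𝒜 g n m n}) (k'' : Fin n) :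
    m k'' ≤ ∑ j', wy g n m B (.inl (j', k'')) := by
  have h1 := 𝒜_colsum g n m B.2 k''.isLt
  calc m k'' = ∑ j', B.1 j' k'' := h1.symm
    _ ≤ ∑ j', wy g n m B (.inl (j', k'')) :=
        Finset.sum_le_sum fun j' _ => exA_le_wy g n m B j' k''

lemma termy_mem (hn : 0 < n)
    (hm : ∀ k' : Fin n, k'.val + 2 ≤ n → 2 ≤ m k')
    (cv : ℕ) (hcv : cv + 2 ≤ n ∨ cv = n)
    {Astar : Fin g → Fin n → ℕ} (hAstar : Astar ∈ 𝒜 g n m cv) (j : Fin g)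
    (IH : ∀ (k' : Fin n) (j' : Fin g) (e : Var g n m → ℕ), k'.val ≤ cv →
      Good g n m k' j' e → mono K g n m e ∈ paperIdeal K g n m hn)
    (B : {A : Fin g → Fin n → ℕ // A ∈ 𝒜 g n m n}) (hBne : B.1 ≠ Astar) :
    mono K g n m (fun v => wy g n m B v + uFun g n m cv Astar j v)
      ∈ paperIdeal K g n m hn := by
  rcases hcv with hcv | hcv
  · have hc : cv < n := by omega
    have hm2c : 2 ≤ m (⟨cv, hc⟩ : Fin n) := hm _ hcv
    obtain ⟨j₀, hj₀ne, hj₀pos⟩ := exists_other_row g n m B.2 ⟨cv, hc⟩ hc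
      (by show cv + 1 < n; omega) (by omega) j
    refine IH ⟨cv, hc⟩ j₀ _ (le_refl _)
      (good_of_step g n m hm cv hAstar j _ _ (le_refl _) _ ?_ ?_)
    · have hu : uFun g n m cv Astar j (.inl (j₀, (⟨cv, hc⟩ : Fin n))) = dd n m ⟨cv, hc⟩ - 1 := by
        simp [uFun, hj₀ne]
      rw [hu]
      have h1 := exA_le_wy g n m B j₀ ⟨cv, hc⟩
      have h2 := dd_pos n m (⟨cv, hc⟩ : Fin n)
      omega
    · intro k'' hk''
      exact wy_colsum g n m B k''
  · rw [hcv] at hAstar IH ⊢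
    obtain ⟨j₀, k₀, hk₀lt, hgtv⟩ := exists_gt g n m hAstar B.2 hBne
    refine IH k₀ j₀ _ (le_of_lt hk₀lt)
      (good_of_step g n m hm n hAstar j _ _ (le_of_lt hk₀lt) _ ?_ ?_)
    · have hu : uFun g n m n Astar j (.inl (j₀, k₀)) = dd n m k₀ - 1 - Astar j₀ k₀ := by
        rw [uFun]; simp only; rw [if_pos hk₀lt]
      rw [hu]
      have h1 := exA_le_wy g n m B j₀ k₀
      have h2 : Astar j₀ k₀ ≤ m k₀ := 𝒜_entry_le_m g n m hAstar hk₀lt j₀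
      have h3 := m_lt_dd n m k₀
      omega
    · intro k'' hk''
      exact wy_colsum g n m B k''

lemma split_f (u : Var g n m → ℕ) :
    ff K g n m * mono K g n m u
      = (∑ b' : Fin (n - 1), ∑ A' ∈ 𝒜 g n m b'.val, ∑ j'' : Fin g,
          mono K g n m (fun v => wx g n m b' A' j'' v + u v))
        + ∑ B : {A : Fin g → Fin n → ℕ // A ∈ 𝒜 g n m n},
            mono K g n m (fun v => wy g n m B v + u v) := by
  rw [f_eq, add_mul, Finset.sum_mul]
  congr 1
  · refine Finset.sum_congr rfl fun b' _ => ?_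
    rw [Finset.sum_mul]
    refine Finset.sum_congr rfl fun A' _ => ?_
    rw [Finset.sum_mul]
    exact Finset.sum_congr rfl fun j'' _ => mono_mul_mono K g n m _ _
  · rw [Finset.sum_mul]
    exact Finset.sum_congr rfl fun B _ => mono_mul_mono K g n m _ _

lemma isolate_x (hn : 0 < n) (u : Var g n m → ℕ) (b : Fin (n - 1))
    {Astar : Fin g → Fin n → ℕ} (hAstar : Astar ∈ 𝒜 g n m b.val) (j : Fin g)
    (hox : ∀ (b' : Fin (n - 1)), ∀ A' ∈ 𝒜 g n m b'.val, ∀ j'' : Fin g,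
      ¬ (b' = b ∧ A' = Astar ∧ j'' = j) →
      mono K g n m (fun v => wx g n m b' A' j'' v + u v) ∈ paperIdeal K g n m hn)
    (hoy : ∀ B : {A : Fin g → Fin n → ℕ // A ∈ 𝒜 g n m n},
      mono K g n m (fun v => wy g n m B v + u v) ∈ paperIdeal K g n m hn) :
    mono K g n m (fun v => wx g n m b Astar j v + u v) ∈ paperIdeal K g n m hn := by
  have hful : ff K g n m * mono K g n m u ∈ paperIdeal K g n m hn :=
    Ideal.mul_mem_right _ _ (f_mem K g n m hn)
  rw [split_f] at hful
  have hY : (∑ B : {A : Fin g → Fin n → ℕ // A ∈ 𝒜 g n m n},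
      mono K g n m (fun v => wy g n m B v + u v)) ∈ paperIdeal K g n m hn :=
    Ideal.sum_mem _ fun B _ => hoy B
  have hS : (∑ b' : Fin (n - 1), ∑ A' ∈ 𝒜 g n m b'.val, ∑ j'' : Fin g,
      mono K g n m (fun v => wx g n m b' A' j'' v + u v)) ∈ paperIdeal K g n m hn :=
    (Submodule.add_mem_iff_left _ hY).mp hful
  rw [← Finset.add_sum_erase Finset.univ _ (Finset.mem_univ b)] at hS
  have h1 : (∑ A' ∈ 𝒜 g n m b.val, ∑ j'' : Fin g,
      mono K g n m (fun v => wx g n m b A' j'' v + u v)) ∈ paperIdeal K g n m hn := by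
    refine (Submodule.add_mem_iff_left _ ?_).mp hS
    refine Ideal.sum_mem _ fun b' hb' => Ideal.sum_mem _ fun A' hA' => Ideal.sum_mem _ fun j'' _ => ?_
    exact hox b' A' hA' j'' fun hcon => (Finset.mem_erase.mp hb').1 hcon.1
  rw [← Finset.add_sum_erase _ _ hAstar] at h1
  have h2 : (∑ j'' : Fin g, mono K g n m (fun v => wx g n m b Astar j'' v + u v))
      ∈ paperIdeal K g n m hn := by
    refine (Submodule.add_mem_iff_left _ ?_).mp h1
    refine Ideal.sum_mem _ fun A' hA' => Ideal.sum_mem _ fun j'' _ => ?_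
    exact hox b A' (Finset.mem_of_mem_erase hA') j'' fun hcon => (Finset.mem_erase.mp hA').1 hcon.2.1
  rw [← Finset.add_sum_erase Finset.univ _ (Finset.mem_univ j)] at h2
  refine (Submodule.add_mem_iff_left _ ?_).mp h2
  refine Ideal.sum_mem _ fun j'' hj'' => ?_
  exact hox b Astar hAstar j'' fun hcon => (Finset.mem_erase.mp hj'').1 hcon.2.2

lemma isolate_y (hn : 0 < n) (u : Var g n m → ℕ)
    (B₀ : {A : Fin g → Fin n → ℕ // A ∈ 𝒜 g n m n})
    (hox : ∀ (b' : Fin (n - 1)), ∀ A' ∈ 𝒜 g n m b'.val, ∀ j'' : Fin g,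
      mono K g n m (fun v => wx g n m b' A' j'' v + u v) ∈ paperIdeal K g n m hn)
    (hoy : ∀ B : {A : Fin g → Fin n → ℕ // A ∈ 𝒜 g n m n}, B ≠ B₀ →
      mono K g n m (fun v => wy g n m B v + u v) ∈ paperIdeal K g n m hn) :
    mono K g n m (fun v => wy g n m B₀ v + u v) ∈ paperIdeal K g n m hn := by
  have hful : ff K g n m * mono K g n m u ∈ paperIdeal K g n m hn :=
    Ideal.mul_mem_right _ _ (f_mem K g n m hn)
  rw [split_f] at hful
  have hX : (∑ b' : Fin (n - 1), ∑ A' ∈ 𝒜 g n m b'.val, ∑ j'' : Fin g,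
      mono K g n m (fun v => wx g n m b' A' j'' v + u v)) ∈ paperIdeal K g n m hn :=
    Ideal.sum_mem _ fun b' _ => Ideal.sum_mem _ fun A' hA' => Ideal.sum_mem _ fun j'' _ =>
      hox b' A' hA' j''
  have hY : (∑ B : {A : Fin g → Fin n → ℕ // A ∈ 𝒜 g n m n},
      mono K g n m (fun v => wy g n m B v + u v)) ∈ paperIdeal K g n m hn :=
    (Submodule.add_mem_iff_right _ hX).mp hful
  rw [← Finset.add_sum_erase Finset.univ _ (Finset.mem_univ B₀)] at hY
  refine (Submodule.add_mem_iff_left _ ?_).mp hY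
  refine Ideal.sum_mem _ fun B hB => ?_
  exact hoy B (Finset.mem_erase.mp hB).1

lemma sing_inl (jj j' : Fin g) (kk k' : Fin n) (t : ℕ) :
    sing g n m (.inl (jj, kk)) t (.inl (j', k')) = if j' = jj ∧ k' = kk then t else 0 := by
  unfold sing
  by_cases h : j' = jj ∧ k' = kk
  · obtain ⟨h1, h2⟩ := h
    subst h1; subst h2
    erw [if_pos rfl, if_pos ⟨rfl, rfl⟩]
  · erw [if_neg, if_neg h]
    intro hc
    apply h
    have hp : (j', k') = (jj, kk) := Sum.inl.inj hc
    exact ⟨congrArg Prod.fst hp, congrArg Prod.snd hp⟩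

lemma target_le (hn : 0 < n) (k : Fin n) (hkpos : 0 < k.val) (hbpf : k.val - 1 < n - 1)
    {A0 : Fin g → Fin n → ℕ} (hA0 : A0 ∈ 𝒜 g n m n) (j : Fin g) (e : Var g n m → ℕ)
    (hEq : ∀ (k' : Fin n), k'.val < k.val → ∀ j', e (.inl (j', k')) = dd n m k' - 1)
    (hTop : dd n m k ≤ e (.inl (j, k))) :
    ∀ v, wx g n m ⟨k.val - 1, hbpf⟩ (resA g n A0 (k.val - 1)) j v
      + uFun g n m (k.val - 1) (resA g n A0 (k.val - 1)) j v ≤ e v := by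
  intro v
  have hvb : (bι n (⟨k.val - 1, hbpf⟩ : Fin (n - 1))).val = k.val - 1 := rfl
  have hvb' : (bι' n (⟨k.val - 1, hbpf⟩ : Fin (n - 1))).val = (k.val - 1) + 1 := rfl
  cases v with
  | inr B =>
      simp only [wx, uFun]
      have h1 : exA g n m (resA g n A0 (k.val - 1)) (.inr B) = 0 := rfl
      have h2 : sing g n m (.inl (j, bι n ⟨k.val - 1, hbpf⟩))
          (m (bι n ⟨k.val - 1, hbpf⟩)) (.inr B) = 0 := by
        unfold sing; rw [if_neg]; exact fun h => by cases h
      have h3 : sing g n m (.inl (j, bι' n ⟨k.val - 1, hbpf⟩))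
          (dd n m (bι' n ⟨k.val - 1, hbpf⟩)) (.inr B) = 0 := by
        unfold sing; rw [if_neg]; exact fun h => by cases h
      rw [h1, h2, h3]
      exact Nat.zero_le _
  | inl p =>
      obtain ⟨j', k'⟩ := p
      simp only [wx]
      rcases Nat.lt_trichotomy k'.val (k.val - 1) with h1 | h2 | h3
      · -- column strictly before k.val - 1
        have eA : exA g n m (resA g n A0 (k.val - 1)) (.inl (j', k')) = A0 j' k' := by
          show resA g n A0 (k.val - 1) j' k' = A0 j' k'
          rw [resA, if_pos h1]
        have e1 : sing g n m (.inl (j, bι n ⟨k.val - 1, hbpf⟩))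
            (m (bι n ⟨k.val - 1, hbpf⟩)) (.inl (j', k')) = 0 := by
          rw [sing_inl, if_neg]
          rintro ⟨-, hk⟩
          have := congrArg Fin.val hk
          omega
        have e2 : sing g n m (.inl (j, bι' n ⟨k.val - 1, hbpf⟩))
            (dd n m (bι' n ⟨k.val - 1, hbpf⟩)) (.inl (j', k')) = 0 := by
          rw [sing_inl, if_neg]
          rintro ⟨-, hk⟩
          have := congrArg Fin.val hk
          omega
        have eu : uFun g n m (k.val - 1) (resA g n A0 (k.val - 1)) j (.inl (j', k'))
            = dd n m k' - 1 - resA g n A0 (k.val - 1) j' k' := by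
          rw [uFun]; simp only; rw [if_pos h1]
        have eR : resA g n A0 (k.val - 1) j' k' = A0 j' k' := by rw [resA, if_pos h1]
        have he : e (.inl (j', k')) = dd n m k' - 1 := hEq k' (by omega) j'
        have hb0 : A0 j' k' ≤ m k' := 𝒜_entry_le_m g n m hA0 k'.isLt j'
        have hmd := m_lt_dd n m k'
        rw [eA, e1, e2, eu, eR, he]
        omega
      · -- column k.val - 1
        have eA : exA g n m (resA g n A0 (k.val - 1)) (.inl (j', k')) = 0 := by
          show resA g n A0 (k.val - 1) j' k' = 0
          rw [resA, if_neg (by omega)]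
        have e2 : sing g n m (.inl (j, bι' n ⟨k.val - 1, hbpf⟩))
            (dd n m (bι' n ⟨k.val - 1, hbpf⟩)) (.inl (j', k')) = 0 := by
          rw [sing_inl, if_neg]
          rintro ⟨-, hk⟩
          have := congrArg Fin.val hk
          omega
        have he : e (.inl (j', k')) = dd n m k' - 1 := hEq k' (by omega) j'
        have hmk : m (bι n ⟨k.val - 1, hbpf⟩) = m k' := by
          congr 1
          exact Fin.ext (by omega)
        have hmd := m_lt_dd n m k'
        by_cases hj : j' = j
        · have e1 : sing g n m (.inl (j, bι n ⟨k.val - 1, hbpf⟩))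
              (m (bι n ⟨k.val - 1, hbpf⟩)) (.inl (j', k')) = m k' := by
            rw [sing_inl, if_pos ⟨hj, Fin.ext (by omega)⟩, hmk]
          have eu : uFun g n m (k.val - 1) (resA g n A0 (k.val - 1)) j (.inl (j', k'))
              = dd n m k' - 1 - m k' := by
            rw [uFun]; simp only
            rw [if_neg (by omega), if_pos h2, if_pos hj]
          rw [eA, e1, e2, eu, he]
          omega
        · have e1 : sing g n m (.inl (j, bι n ⟨k.val - 1, hbpf⟩))
              (m (bι n ⟨k.val - 1, hbpf⟩)) (.inl (j', k')) = 0 := by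
            rw [sing_inl, if_neg]
            rintro ⟨hj', -⟩
            exact hj hj'
          have eu : uFun g n m (k.val - 1) (resA g n A0 (k.val - 1)) j (.inl (j', k'))
              = dd n m k' - 1 := by
            rw [uFun]; simp only
            rw [if_neg (by omega), if_pos h2, if_neg hj]
          rw [eA, e1, e2, eu, he]
          omega
      · -- column at least k.val
        have eA : exA g n m (resA g n A0 (k.val - 1)) (.inl (j', k')) = 0 := by
          show resA g n A0 (k.val - 1) j' k' = 0
          rw [resA, if_neg (by omega)]
        have e1 : sing g n m (.inl (j, bι n ⟨k.val - 1, hbpf⟩))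
            (m (bι n ⟨k.val - 1, hbpf⟩)) (.inl (j', k')) = 0 := by
          rw [sing_inl, if_neg]
          rintro ⟨-, hk⟩
          have := congrArg Fin.val hk
          omega
        have eu : uFun g n m (k.val - 1) (resA g n A0 (k.val - 1)) j (.inl (j', k'))
            = 0 := by
          rw [uFun]; simp only
          rw [if_neg (by omega), if_neg (by omega)]
        by_cases hjk : j' = j ∧ k'.val = k.val
        · obtain ⟨hj, hk⟩ := hjk
          subst hj
          have hkk : k' = k := Fin.ext hk
          subst hkk
          have e2 : sing g n m (.inl (j', bι' n ⟨k'.val - 1, hbpf⟩))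
              (dd n m (bι' n ⟨k'.val - 1, hbpf⟩)) (.inl (j', k')) = dd n m k' := by
            rw [sing_inl, if_pos ⟨rfl, Fin.ext (by omega)⟩]
            congr 1
            exact Fin.ext (by omega)
          rw [eA, e1, e2, eu]
          have := hTop
          omega
        · have e2 : sing g n m (.inl (j, bι' n ⟨k.val - 1, hbpf⟩))
              (dd n m (bι' n ⟨k.val - 1, hbpf⟩)) (.inl (j', k')) = 0 := by
            rw [sing_inl, if_neg]
            rintro ⟨hj', hk'⟩
            have := congrArg Fin.val hk'
            exact hjk ⟨hj', by omega⟩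
          rw [eA, e1, e2, eu]
          exact Nat.zero_le _

lemma mainLemma (hn : 0 < n)
    (hm : ∀ k' : Fin n, k'.val + 2 ≤ n → 2 ≤ m k')
    {A0 : Fin g → Fin n → ℕ} (hA0 : A0 ∈ 𝒜 g n m n) :
    ∀ (k : Fin n) (j : Fin g) (e : Var g n m → ℕ),
      Good g n m k j e → mono K g n m e ∈ paperIdeal K g n m hn := by
  suffices H : ∀ (N : ℕ) (k : Fin n), k.val < N → ∀ (j : Fin g) (e : Var g n m → ℕ),
      Good g n m k j e → mono K g n m e ∈ paperIdeal K g n m hn from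
    fun k j e h => H (k.val + 1) k (Nat.lt_succ_self _) j e h
  intro N
  induction N with
  | zero => intro k hk; omega
  | succ N IHN =>
    intro k hk j e hGood
    by_cases hex : ∃ (k' : Fin n) (j' : Fin g), k'.val < k.val ∧ dd n m k' ≤ e (.inl (j', k'))
    · obtain ⟨k', j', hlt, hge⟩ := hex
      exact IHN k' (by omega) j' e ⟨hge, fun k'' h'' => hGood.2 k'' (by omega)⟩
    · push_neg at hex
      rcases Nat.eq_zero_or_pos k.val with hk0 | hkpos
      · have hkeq : k = ⟨0, hn⟩ := Fin.ext hk0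
        subst hkeq
        exact base_mem K g n m hn j hGood.1
      · -- inductive step
        have hkn1 : k.val ≤ n - 1 := by have := k.isLt; omega
        have hbpf : k.val - 1 < n - 1 := by have := k.isLt; omega
        have hAstar := resA_mem g n m hA0 (k.val - 1)
        have hIH' : ∀ (k' : Fin n) (j' : Fin g) (e' : Var g n m → ℕ), k'.val ≤ k.val - 1 →
            Good g n m k' j' e' → mono K g n m e' ∈ paperIdeal K g n m hn :=
          fun k' j' e' hle hg => IHN k' (by omega) j' e' hg
        -- equality on earlier columns
        have hEq : ∀ (k' : Fin n), k'.val < k.val → ∀ j', e (.inl (j', k')) = dd n m k' - 1 := by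
          intro k' hlt j'
          have hub : ∀ j'', e (.inl (j'', k')) ≤ dd n m k' - 1 := fun j'' => by
            have h1 := hex k' j''
            have h2 := dd_pos n m k'
            omega
          have hcs := (hGood.2 k' hlt).2
          by_contra hne
          have hstrict : ∑ j'', e (.inl (j'', k')) < ∑ _j'' : Fin g, (dd n m k' - 1) :=
            Finset.sum_lt_sum (fun i _ => hub i)
              ⟨j', Finset.mem_univ _, by have := hub j'; omega⟩
          rw [Finset.sum_const, Finset.card_univ, Fintype.card_fin, smul_eq_mul] at hstrict
          omega
        -- the isolated target term lies in the ideal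
        have hmain : mono K g n m (fun v =>
            wx g n m ⟨k.val - 1, hbpf⟩ (resA g n A0 (k.val - 1)) j v
              + uFun g n m (k.val - 1) (resA g n A0 (k.val - 1)) j v)
            ∈ paperIdeal K g n m hn := by
          refine isolate_x K g n m hn _ ⟨k.val - 1, hbpf⟩ hAstar j ?_ ?_
          · intro b' A' hA' j'' hne
            refine termx_mem K g n m hn hm (k.val - 1) hAstar j hIH' b' hA' j'' ?_
            rintro ⟨hb1, hb2, hb3⟩
            exact hne ⟨Fin.ext hb1, hb2, hb3⟩
          · intro B
            refine termy_mem K g n m hn hm (k.val - 1) (Or.inl (by omega)) hAstar j hIH' B ?_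
            -- B.1 has a nonzero column k.val - 1, while the restriction does not
            intro heq
            have hc : k.val - 1 < n := by omega
            have hm2c : 2 ≤ m (⟨k.val - 1, hc⟩ : Fin n) := hm _ (by show k.val - 1 + 2 ≤ n; omega)
            have hcs := 𝒜_colsum g n m B.2 (show (⟨k.val - 1, hc⟩ : Fin n).val < n from hc)
            rw [heq] at hcs
            rw [Finset.sum_eq_zero (fun j' _ => by
              show resA g n A0 (k.val - 1) j' ⟨k.val - 1, hc⟩ = 0
              rw [resA, if_neg (by show ¬ (k.val - 1) < k.val - 1; omega)])] at hcs
            omega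
        exact mono_mem_of_le K g n m
          (target_le g n m hn k hkpos hbpf hA0 j e hEq hGood.1) hmain
/-- With `I = I_{g,(m_1,…,m_n)}` and
`S = ∏_{j,k} x_{j,k}^{d_k - 1}`, for every matrix `A ∈ 𝒜_n` the product
`y_A · S` lies in `I`. -/
theorem statement2 (hg : 2 ≤ g) (hn : 0 < n)
    (hm2 : ∀ i : Fin n, i.val + 2 < n → 2 ≤ m i)
    (hm1 : ∀ i : Fin n, i.val + 2 = n → 1 ≤ m i)
    (A : {A : Fin g → Fin n → ℕ // A ∈ 𝒜 g n m n}) :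
    yv K g n m A * SS K g n m ∈ paperIdeal K g n m hn := by
  have hm : ∀ k' : Fin n, k'.val + 2 ≤ n → 2 ≤ m k' :=
    fun k' h => m_two g n m hm2 hm1 A.2 k' h
  have j0 : Fin g := ⟨0, by omega⟩
  have hIH : ∀ (k' : Fin n) (j' : Fin g) (e : Var g n m → ℕ), k'.val ≤ n →
      Good g n m k' j' e → mono K g n m e ∈ paperIdeal K g n m hn :=
    fun k' j' e _ hgood => mainLemma K g n m hn hm A.2 k' j' e hgood
  have h1 : yv K g n m A * SS K g n m
      = mono K g n m (fun v => wy g n m A v + uFun g n m n A.1 j0 v) := by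
    erw [SS, yv, show (X (Sum.inr A) : MvPolynomial (Var g n m) K) = X (Sum.inr A) ^ 1 from
      (pow_one _).symm, X_pow_eq, Xpow_eq, mono_mul_mono]
    congr 1
    funext v
    cases v with
    | inl p =>
        obtain ⟨j', k'⟩ := p
        have hne1 : ¬ ((Sum.inl (j', k') : Var g n m) = Sum.inr A) := fun h => by cases h
        have hb : A.1 j' k' ≤ m k' := 𝒜_entry_le_m g n m A.2 k'.isLt j'
        have hmd := m_lt_dd n m k'
        have hkn := k'.isLt
        simp only [wy, sing, exA, uFun, hne1]
        split_ifs <;> omega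
    | inr B =>
        simp only [wy, sing, exA, uFun]
        split_ifs <;> omega
  rw [h1]
  refine isolate_y K g n m hn _ A ?_ ?_
  · intro b' A' hA' j''
    refine termx_mem K g n m hn hm n A.2 j0 hIH b' hA' j'' ?_
    rintro ⟨hb1, -, -⟩
    have := b'.isLt
    omega
  · intro B hBne
    refine termy_mem K g n m hn hm n (Or.inr rfl) A.2 j0 hIH B ?_
    intro heq
    exact hBne (Subtype.ext heq)

end Paper
end
end
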